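/- arXiv:1302.6397 — 3 statements merged into one kernel-verified Lean document; each statement's English description precedes it below -/
import Mathlib

section
/- For every W ∈ 𝔲(3) and all X, Y ∈ 𝔪 one has ω₀([W,X],Y) + ω₀(X,[W,Y]) = 0 and ω̃₀([W,X],Y) + ω̃₀(X,[W,Y]) = 0, and for all real λ, μ one has g([W,X],Y) + g(X,[W,Y]) = 0; that is, ω₀, ω̃₀ and g are invariant under the adjoint action of 𝔲(3) on 𝔪. -/
/-!
Common setup: 𝔤 = 𝔰𝔬(7) realised as real skew-symmetric 7×7 matrices with
bracket `bk X Y = X*Y - Y*X`; the matrices A, B, C, A', B', C', P, Q, R, P', Q', R', E;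
the subspaces 𝔪 (`mm`) and 𝔲(3) (`u3`); the dual functionals a, …, r' (written
`fa, …, fr'`), given by the explicit formulas that characterise them as the unique
linear functionals on 𝔰𝔬(7) vanishing on 𝔲(3) whose restrictions to 𝔪 are dual to
the chosen basis; the invariant forms; the endomorphisms I, J, K; and the
Chevalley–Eilenberg differentials `dM1`, `dM2` restricted to 𝔪.
-/

open Matrix

noncomputable section

/-- Ambient space of real 7×7 matrices (rows/columns indexed by `Fin 7`). -/
abbrev M7 : Type := Matrix (Fin 7) (Fin 7) ℝ

/-- `Eij i j`: the skew matrix with `(i,j)` entry `1`, `(j,i)` entry `-1`, all others `0`. -/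
def Eij (i j : Fin 7) : M7 := Matrix.single i j 1 - Matrix.single j i 1

def mA  : M7 := Eij 0 1
def mB  : M7 := Eij 0 2
def mC  : M7 := Eij 0 3
def mA' : M7 := Eij 0 4
def mB' : M7 := Eij 0 5
def mC' : M7 := Eij 0 6
def mP  : M7 := Eij 2 3 - Eij 5 6
def mQ  : M7 := Eij 3 1 - Eij 6 4
def mR  : M7 := Eij 1 2 - Eij 4 5
def mP' : M7 := Eij 2 6 - Eij 3 5
def mQ' : M7 := Eij 3 4 - Eij 1 6
def mR' : M7 := Eij 1 5 - Eij 2 4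
def mE  : M7 := Eij 1 4 + Eij 2 5 + Eij 3 6

/-- The Lie bracket `[X,Y] = XY - YX`. -/
def bk (X Y : M7) : M7 := X * Y - Y * X

/-- 𝔰𝔬(7): the skew-symmetric matrices. -/
def so7 : Set M7 := {X : M7 | Xᵀ = -X}

/-- The first standard basis vector e₀ of ℝ⁷. -/
def e0 : Fin 7 → ℝ := fun i => if i = 0 then 1 else 0

/-- 𝔲(3) = {X ∈ 𝔰𝔬(7) : X e₀ = 0 and XE = EX}. -/
def u3 : Set M7 := {X : M7 | Xᵀ = -X ∧ X.mulVec e0 = 0 ∧ X * mE = mE * X}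

/-- 𝔪: the span of the twelve matrices A, …, R'. -/
def mm : Submodule ℝ M7 :=
  Submodule.span ℝ ({mA, mB, mC, mA', mB', mC', mP, mQ, mR, mP', mQ', mR'} : Set M7)

/- The linear functionals on 𝔰𝔬(7) vanishing on 𝔲(3) whose restrictions to 𝔪 form the
dual basis of the basis A, …, R' (given by their explicit formulas on skew matrices,
extended to all of `M7`). -/
def fa  (X : M7) : ℝ := (X 0 1 - X 1 0) / 2
def fb  (X : M7) : ℝ := (X 0 2 - X 2 0) / 2
def fc  (X : M7) : ℝ := (X 0 3 - X 3 0) / 2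
def fa' (X : M7) : ℝ := (X 0 4 - X 4 0) / 2
def fb' (X : M7) : ℝ := (X 0 5 - X 5 0) / 2
def fc' (X : M7) : ℝ := (X 0 6 - X 6 0) / 2
def fp  (X : M7) : ℝ := (X 2 3 - X 3 2 - X 5 6 + X 6 5) / 4
def fq  (X : M7) : ℝ := (X 3 1 - X 1 3 - X 6 4 + X 4 6) / 4
def fr  (X : M7) : ℝ := (X 1 2 - X 2 1 - X 4 5 + X 5 4) / 4
def fp' (X : M7) : ℝ := (X 2 6 - X 6 2 - X 3 5 + X 5 3) / 4
def fq' (X : M7) : ℝ := (X 3 4 - X 4 3 - X 1 6 + X 6 1) / 4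
def fr' (X : M7) : ℝ := (X 1 5 - X 5 1 - X 2 4 + X 4 2) / 4

/-- Wedge of two 1-forms: `(α∧β)(X,Y) = α(X)β(Y) - β(X)α(Y)`. -/
def wdg2 (α β : M7 → ℝ) (X Y : M7) : ℝ := α X * β Y - β X * α Y

/-- Wedge of three 1-forms (determinant convention). -/
def wdg3 (α β γ : M7 → ℝ) (X Y Z : M7) : ℝ :=
  α X * β Y * γ Z - α X * γ Y * β Z - β X * α Y * γ Z
    + β X * γ Y * α Z + γ X * α Y * β Z - γ X * β Y * α Z

/-- ω₀ = a'∧a + b'∧b + c'∧c. -/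
def om0 (X Y : M7) : ℝ := wdg2 fa' fa X Y + wdg2 fb' fb X Y + wdg2 fc' fc X Y

/-- ω̃₀ = p'∧p + q'∧q + r'∧r. -/
def omt0 (X Y : M7) : ℝ := wdg2 fp' fp X Y + wdg2 fq' fq X Y + wdg2 fr' fr X Y

/-- ω_J = p∧a - p'∧a' + q∧b - q'∧b' + r∧c - r'∧c'. -/
def omJ (X Y : M7) : ℝ :=
  wdg2 fp fa X Y - wdg2 fp' fa' X Y + wdg2 fq fb X Y - wdg2 fq' fb' X Y
    + wdg2 fr fc X Y - wdg2 fr' fc' X Y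

/-- ω_K = p'∧a + p∧a' + q'∧b + q∧b' + r'∧c + r∧c'. -/
def omK (X Y : M7) : ℝ :=
  wdg2 fp' fa X Y + wdg2 fp fa' X Y + wdg2 fq' fb X Y + wdg2 fq fb' X Y
    + wdg2 fr' fc X Y + wdg2 fr fc' X Y

/-- ω_I = λω₀ + μω̃₀. -/
def omI (lm mu : ℝ) (X Y : M7) : ℝ := lm * om0 X Y + mu * omt0 X Y

/-- The metric g = λ(a⊗a + … + c'⊗c') + μ(p⊗p + … + r'⊗r'). -/
def gmet (lm mu : ℝ) (X Y : M7) : ℝ :=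
  lm * (fa X * fa Y + fb X * fb Y + fc X * fc Y
      + fa' X * fa' Y + fb' X * fb' Y + fc' X * fc' Y)
  + mu * (fp X * fp Y + fq X * fq Y + fr X * fr Y
      + fp' X * fp' Y + fq' X * fq' Y + fr' X * fr' Y)

/-- The endomorphism I of 𝔪 (extended to `M7` via the dual functionals):
A↦A', …, R↦R', A'↦-A, …, R'↦-R. -/
def Iop (X : M7) : M7 :=
  fa X • mA' + fb X • mB' + fc X • mC' + fp X • mP' + fq X • mQ' + fr X • mR'
    - fa' X • mA - fb' X • mB - fc' X • mC - fp' X • mP - fq' X • mQ - fr' X • mR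

/-- The endomorphism J of 𝔪: A↦λP, …, C'↦-λR', P↦-μA, …, R'↦μC'. -/
def Jop (lm mu : ℝ) (X : M7) : M7 :=
  (lm * fa X) • mP + (lm * fb X) • mQ + (lm * fc X) • mR
    - (lm * fa' X) • mP' - (lm * fb' X) • mQ' - (lm * fc' X) • mR'
    - (mu * fp X) • mA - (mu * fq X) • mB - (mu * fr X) • mC
    + (mu * fp' X) • mA' + (mu * fq' X) • mB' + (mu * fr' X) • mC'

/-- The endomorphism K of 𝔪: A↦λP', …, C'↦λR, P'↦-μA, …, R↦-μC'. -/
def Kop (lm mu : ℝ) (X : M7) : M7 :=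
  (lm * fa X) • mP' + (lm * fb X) • mQ' + (lm * fc X) • mR'
    + (lm * fa' X) • mP + (lm * fb' X) • mQ + (lm * fc' X) • mR
    - (mu * fp' X) • mA - (mu * fq' X) • mB - (mu * fr' X) • mC
    - (mu * fp X) • mA' - (mu * fq X) • mB' - (mu * fr X) • mC'

/-- `d_Mα(X,Y) = -α([X,Y])` for a 1-form α. -/
def dM1 (α : M7 → ℝ) (X Y : M7) : ℝ := -α (bk X Y)

/-- `d_Mω(X,Y,Z) = -ω([X,Y],Z) + ω([X,Z],Y) - ω([Y,Z],X)` for a 2-form ω. -/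
def dM2 (ω : M7 → M7 → ℝ) (X Y Z : M7) : ℝ :=
  -ω (bk X Y) Z + ω (bk X Z) Y - ω (bk Y Z) X

/-- For an endomorphism T and a 3-form β, `(Tβ)(X,Y,Z) = -β(TX,TY,TZ)`. -/
def act3 (T : M7 → M7) (β : M7 → M7 → M7 → ℝ) (X Y Z : M7) : ℝ :=
  -β (T X) (T Y) (T Z)

/-- Φ = Σ_cyc (a∧b∧r - a'∧b'∧r + a∧b'∧r' + a'∧b∧r'). -/
def Phi (X Y Z : M7) : ℝ :=
  (wdg3 fa fb fr X Y Z - wdg3 fa' fb' fr X Y Z + wdg3 fa fb' fr' X Y Z + wdg3 fa' fb fr' X Y Z)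
  + (wdg3 fb fc fp X Y Z - wdg3 fb' fc' fp X Y Z + wdg3 fb fc' fp' X Y Z + wdg3 fb' fc fp' X Y Z)
  + (wdg3 fc fa fq X Y Z - wdg3 fc' fa' fq X Y Z + wdg3 fc fa' fq' X Y Z + wdg3 fc' fa fq' X Y Z)

/-- Ψ = Σ_cyc (p∧q∧r - 3 p∧q'∧r'). -/
def Psi (X Y Z : M7) : ℝ :=
  (wdg3 fp fq fr X Y Z - 3 * wdg3 fp fq' fr' X Y Z)
  + (wdg3 fq fr fp X Y Z - 3 * wdg3 fq fr' fp' X Y Z)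
  + (wdg3 fr fp fq X Y Z - 3 * wdg3 fr fp' fq' X Y Z)

/-- β_I = J d_Mω_J + K d_Mω_K. -/
def betaI (lm mu : ℝ) (X Y Z : M7) : ℝ :=
  act3 (Jop lm mu) (dM2 omJ) X Y Z + act3 (Kop lm mu) (dM2 omK) X Y Z

/-- β_J = K d_Mω_K + I d_Mω_I. -/
def betaJ (lm mu : ℝ) (X Y Z : M7) : ℝ :=
  act3 (Kop lm mu) (dM2 omK) X Y Z + act3 Iop (dM2 (omI lm mu)) X Y Z

/-- β_K = I d_Mω_I + J d_Mω_J. -/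
def betaK (lm mu : ℝ) (X Y Z : M7) : ℝ :=
  act3 Iop (dM2 (omI lm mu)) X Y Z + act3 (Jop lm mu) (dM2 omJ) X Y Z

/-- ψ⁽³⁾ = (1/12)(β_I + β_J + β_K). -/
def psi3 (lm mu : ℝ) (X Y Z : M7) : ℝ :=
  (1/12) * (betaI lm mu X Y Z + betaJ lm mu X Y Z + betaK lm mu X Y Z)

end


noncomputable section AuxInvariance
open Matrix

private lemma skew_entries {X : M7} (h : Xᵀ = -X) : ∀ i j : Fin 7, X j i = -X i j := by
  intro i j
  have := congrFun (congrFun h i) j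
  simpa [Matrix.transpose_apply] using this

private def skewSub : Submodule ℝ M7 where
  carrier := {X : M7 | Xᵀ = -X}
  add_mem' := by
    intro a b ha hb
    simp only [Set.mem_setOf_eq] at *
    rw [Matrix.transpose_add, ha, hb]
    abel
  zero_mem' := by simp
  smul_mem' := by
    intro c x hx
    simp only [Set.mem_setOf_eq] at *
    rw [Matrix.transpose_smul, hx, smul_neg]

private lemma Eij_transpose (i j : Fin 7) : (Eij i j)ᵀ = -Eij i j := by
  ext a b
  simp [Eij, Matrix.single, and_comm]

private lemma skew_of_mem_mm {X : M7} (hX : X ∈ mm) : Xᵀ = -X := by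
  have hsub : mm ≤ skewSub := by
    rw [mm, Submodule.span_le]
    intro Z hZ
    simp only [Set.mem_insert_iff, Set.mem_singleton_iff] at hZ
    rcases hZ with h|h|h|h|h|h|h|h|h|h|h|h <;> subst h <;>
      show _ᵀ = -_ <;>
      simp only [mA, mB, mC, mA', mB', mC', mP, mQ, mR, mP', mQ', mR',
        Matrix.transpose_sub, Eij_transpose] <;>
      first
        | rfl
        | abel
  exact hsub hX

private lemma bk_skew {W X : M7} (hW : Wᵀ = -W) (hX : Xᵀ = -X) : (bk W X)ᵀ = -bk W X := by
  simp only [bk, Matrix.transpose_sub, Matrix.transpose_mul, hW, hX, neg_mul_neg]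
  rw [neg_sub]

private lemma om0_eq {X Y : M7} (hX : Xᵀ = -X) (hY : Yᵀ = -Y) :
    om0 X Y = (X * mE * Y) 0 0 := by
  have hx := skew_entries hX
  have hy := skew_entries hY
  have hxd : ∀ i : Fin 7, X i i = 0 := fun i => by have := hx i i; linarith
  have hyd : ∀ i : Fin 7, Y i i = 0 := fun i => by have := hy i i; linarith
  simp only [om0, wdg2, fa, fb, fc, fa', fb', fc']
  simp [Matrix.mul_apply, Fin.sum_univ_seven, mE, Eij, Matrix.single]
  simp only [hx 0 1, hx 0 2, hx 0 3, hx 0 4, hx 0 5, hx 0 6, hx 1 2, hx 1 3, hx 1 4, hx 1 5, hx 1 6, hx 2 3, hx 2 4, hx 2 5, hx 2 6, hx 3 4, hx 3 5, hx 3 6, hx 4 5, hx 4 6, hx 5 6, hy 0 1, hy 0 2, hy 0 3, hy 0 4, hy 0 5, hy 0 6, hy 1 2, hy 1 3, hy 1 4, hy 1 5, hy 1 6, hy 2 3, hy 2 4, hy 2 5, hy 2 6, hy 3 4, hy 3 5, hy 3 6, hy 4 5, hy 4 6, hy 5 6, hxd, hyd]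
  try ring

private lemma omt0_eq {X Y : M7} (hX : Xᵀ = -X) (hY : Yᵀ = -Y) :
    omt0 X Y = (Matrix.trace (X * mE * Y) - (X * mE * Y) 0 0) / 4 := by
  have hx := skew_entries hX
  have hy := skew_entries hY
  have hxd : ∀ i : Fin 7, X i i = 0 := fun i => by have := hx i i; linarith
  have hyd : ∀ i : Fin 7, Y i i = 0 := fun i => by have := hy i i; linarith
  simp only [omt0, wdg2, fp, fq, fr, fp', fq', fr']
  simp [Matrix.trace, Matrix.diag, Matrix.mul_apply, Fin.sum_univ_seven, mE, Eij,
    Matrix.single]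
  simp only [hx 0 1, hx 0 2, hx 0 3, hx 0 4, hx 0 5, hx 0 6, hx 1 2, hx 1 3, hx 1 4, hx 1 5, hx 1 6, hx 2 3, hx 2 4, hx 2 5, hx 2 6, hx 3 4, hx 3 5, hx 3 6, hx 4 5, hx 4 6, hx 5 6, hy 0 1, hy 0 2, hy 0 3, hy 0 4, hy 0 5, hy 0 6, hy 1 2, hy 1 3, hy 1 4, hy 1 5, hy 1 6, hy 2 3, hy 2 4, hy 2 5, hy 2 6, hy 3 4, hy 3 5, hy 3 6, hy 4 5, hy 4 6, hy 5 6, hxd, hyd]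
  try ring

private lemma gmet_eq {X Y : M7} (hX : Xᵀ = -X) (hY : Yᵀ = -Y) (lm mu : ℝ) :
    gmet lm mu X Y =
      lm * (-((X * Y) 0 0)) +
      mu * ((X * Y) 0 0 / 4 - Matrix.trace (X * Y) / 8 - Matrix.trace (X * mE * Y * mE) / 8) := by
  have hx := skew_entries hX
  have hy := skew_entries hY
  have hxd : ∀ i : Fin 7, X i i = 0 := fun i => by have := hx i i; linarith
  have hyd : ∀ i : Fin 7, Y i i = 0 := fun i => by have := hy i i; linarith
  simp only [gmet, fa, fb, fc, fa', fb', fc', fp, fq, fr, fp', fq', fr']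
  simp [Matrix.trace, Matrix.diag, Matrix.mul_apply, Fin.sum_univ_seven, mE, Eij,
    Matrix.single]
  simp only [hx 0 1, hx 0 2, hx 0 3, hx 0 4, hx 0 5, hx 0 6, hx 1 2, hx 1 3, hx 1 4, hx 1 5, hx 1 6, hx 2 3, hx 2 4, hx 2 5, hx 2 6, hx 3 4, hx 3 5, hx 3 6, hx 4 5, hx 4 6, hx 5 6, hy 0 1, hy 0 2, hy 0 3, hy 0 4, hy 0 5, hy 0 6, hy 1 2, hy 1 3, hy 1 4, hy 1 5, hy 1 6, hy 2 3, hy 2 4, hy 2 5, hy 2 6, hy 3 4, hy 3 5, hy 3 6, hy 4 5, hy 4 6, hy 5 6, hxd, hyd]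
  try ring

private lemma key1 {W : M7} (hWE : W * mE = mE * W) (M N : M7) :
    bk W M * mE * N + M * mE * bk W N = W * (M * mE * N) - M * mE * N * W := by
  have h : M * W * mE * N = M * mE * (W * N) := by
    calc M * W * mE * N = M * (W * mE) * N := by noncomm_ring
      _ = M * (mE * W) * N := by rw [hWE]
      _ = M * mE * (W * N) := by noncomm_ring
  simp only [bk, sub_mul, mul_sub]
  rw [h]
  noncomm_ring

private lemma key2 (W M N : M7) :
    bk W M * N + M * bk W N = W * (M * N) - M * N * W := by
  simp only [bk]
  noncomm_ring

private lemma key3 {W : M7} (hWE : W * mE = mE * W) (M N : M7) :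
    bk W M * mE * N * mE + M * mE * bk W N * mE =
      W * (M * mE * N * mE) - M * mE * N * mE * W := by
  have h1 : M * W * mE * N * mE = M * mE * (W * N) * mE := by
    calc M * W * mE * N * mE = M * (W * mE) * (N * mE) := by noncomm_ring
      _ = M * (mE * W) * (N * mE) := by rw [hWE]
      _ = M * mE * (W * N) * mE := by noncomm_ring
  have h2 : M * mE * (N * W) * mE = M * mE * N * mE * W := by
    calc M * mE * (N * W) * mE = M * mE * N * (W * mE) := by noncomm_ring
      _ = M * mE * N * (mE * W) := by rw [hWE]
      _ = M * mE * N * mE * W := by noncomm_ring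
  simp only [bk, sub_mul, mul_sub]
  rw [h1, h2]
  noncomm_ring

end AuxInvariance
/-- ω₀, ω̃₀ and g are invariant under the adjoint action of 𝔲(3) on 𝔪. -/
theorem stmt1 :
    ∀ W ∈ u3, ∀ X ∈ mm, ∀ Y ∈ mm,
      (om0 (bk W X) Y + om0 X (bk W Y) = 0) ∧
      (omt0 (bk W X) Y + omt0 X (bk W Y) = 0) ∧
      (∀ lm mu : ℝ, gmet lm mu (bk W X) Y + gmet lm mu X (bk W Y) = 0) := by
  intro W hW X hX Y hY
  obtain ⟨hWs, hWv, hWE⟩ := hW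
  have hXs := skew_of_mem_mm hX
  have hYs := skew_of_mem_mm hY
  have hw := skew_entries hWs
  have hc : ∀ j : Fin 7, W j 0 = 0 := by
    intro j
    have := congrFun hWv j
    simpa [Matrix.mulVec, dotProduct, e0, Fin.sum_univ_seven] using this
  have hr : ∀ j : Fin 7, W 0 j = 0 := by
    intro j
    rw [hw j 0, hc j, neg_zero]
  have hbX := bk_skew hWs hXs
  have hbY := bk_skew hWs hYs
  have e00 : ∀ M : M7, (W * M - M * W) 0 0 = 0 := by
    intro M
    simp [Matrix.sub_apply, Matrix.mul_apply, Fin.sum_univ_seven, hr, hc]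
  have etr : ∀ M : M7, Matrix.trace (W * M - M * W) = 0 := by
    intro M
    rw [Matrix.trace_sub, Matrix.trace_mul_comm, sub_self]
  refine ⟨?_, ?_, ?_⟩
  · rw [om0_eq hbX hYs, om0_eq hXs hbY, ← Matrix.add_apply, key1 hWE X Y, e00]
  · rw [omt0_eq hbX hYs, omt0_eq hXs hbY]
    have h1 : Matrix.trace (bk W X * mE * Y) + Matrix.trace (X * mE * bk W Y) = 0 := by
      rw [← Matrix.trace_add, key1 hWE X Y, etr]
    have h2 : (bk W X * mE * Y) 0 0 + (X * mE * bk W Y) 0 0 = 0 := by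
      rw [← Matrix.add_apply, key1 hWE X Y, e00]
    linarith
  · intro lm mu
    rw [gmet_eq hbX hYs lm mu, gmet_eq hXs hbY lm mu]
    have h1 : (bk W X * Y) 0 0 + (X * bk W Y) 0 0 = 0 := by
      rw [← Matrix.add_apply, key2 W X Y, e00]
    have h2 : Matrix.trace (bk W X * Y) + Matrix.trace (X * bk W Y) = 0 := by
      rw [← Matrix.trace_add, key2 W X Y, etr]
    have h3 : Matrix.trace (bk W X * mE * Y * mE) + Matrix.trace (X * mE * bk W Y * mE) = 0 := by
      rw [← Matrix.trace_add, key3 hWE X Y, etr]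
    linear_combination (-lm + mu / 4) * h1 - (mu / 8) * h2 - (mu / 8) * h3
end

section
/- The central element E of 𝔲(3) rotates the pair (ω_J, ω_K) with speed 3: for all X, Y ∈ 𝔪 one has ω_J([E,X],Y) + ω_J(X,[E,Y]) = 3 ω_K(X,Y) and ω_K([E,X],Y) + ω_K(X,[E,Y]) = −3 ω_J(X,Y). In particular the two-dimensional span of ω_J and ω_K is invariant under the adjoint action of 𝔲(3), although neither form is itself invariant. -/
/-!
Common setup: 𝔤 = 𝔰𝔬(7) realised as real skew-symmetric 7×7 matrices with
bracket `bk X Y = X*Y - Y*X`; the matrices A, B, C, A', B', C', P, Q, R, P', Q', R', E;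
the subspaces 𝔪 (`mm`) and 𝔲(3) (`u3`); the dual functionals a, …, r' (written
`fa, …, fr'`), given by the explicit formulas that characterise them as the unique
linear functionals on 𝔰𝔬(7) vanishing on 𝔲(3) whose restrictions to 𝔪 are dual to
the chosen basis; the invariant forms; the endomorphisms I, J, K; and the
Chevalley–Eilenberg differentials `dM1`, `dM2` restricted to 𝔪.
-/

open Matrix

section Aux

lemma mulSB (W : M7) (a b i j : Fin 7) :
    (W * Matrix.single a b (1:ℝ)) i j = if j = b then W i a else 0 := by
  by_cases h : j = b
  · subst h; simp
  · simp [Matrix.mul_single_apply_of_ne (c := (1:ℝ)) a b i j h W, h]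

lemma sbMul (W : M7) (a b i j : Fin 7) :
    (Matrix.single a b (1:ℝ) * W) i j = if i = a then W b j else 0 := by
  by_cases h : i = a
  · subst h; simp
  · simp [Matrix.single_mul_apply_of_ne (c := (1:ℝ)) a b i j h W, h]

lemma bkEij (W : M7) (a b i j : Fin 7) :
    bk W (Eij a b) i j = ((if j = b then W i a else 0) - (if j = a then W i b else 0))
      - ((if i = a then W b j else 0) - (if i = b then W a j else 0)) := by
  simp [bk, Eij, Matrix.mul_sub, Matrix.sub_mul, Matrix.sub_apply, mulSB, sbMul]

lemma Eij_apply (a b i j : Fin 7) :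
    Eij a b i j = (if a = i ∧ b = j then 1 else 0) - (if b = i ∧ a = j then 1 else 0) := by
  simp [Eij, Matrix.single, Matrix.sub_apply]

lemma bk_subr (W X Y : M7) : bk W (X - Y) = bk W X - bk W Y := by
  simp only [bk, Matrix.mul_sub, Matrix.sub_mul]; abel

lemma bk_addr (W X Y : M7) : bk W (X + Y) = bk W X + bk W Y := by
  simp only [bk, Matrix.mul_add, Matrix.add_mul]; abel

lemma bk_smulr (W : M7) (c : ℝ) (X : M7) : bk W (c • X) = c • bk W X := by
  simp only [bk, Matrix.mul_smul, Matrix.smul_mul, smul_sub]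

lemma bk_zeror (W : M7) : bk W (0 : M7) = 0 := by
  simp [bk]

lemma omJ_addl (X X' Y : M7) : omJ (X + X') Y = omJ X Y + omJ X' Y := by
  simp only [omJ, wdg2, fa, fb, fc, fa', fb', fc', fp, fq, fr, fp', fq', fr',
    Matrix.add_apply]; ring

lemma omJ_addr (X Y Y' : M7) : omJ X (Y + Y') = omJ X Y + omJ X Y' := by
  simp only [omJ, wdg2, fa, fb, fc, fa', fb', fc', fp, fq, fr, fp', fq', fr',
    Matrix.add_apply]; ring

lemma omJ_smull (c : ℝ) (X Y : M7) : omJ (c • X) Y = c * omJ X Y := by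
  simp only [omJ, wdg2, fa, fb, fc, fa', fb', fc', fp, fq, fr, fp', fq', fr',
    Matrix.smul_apply, smul_eq_mul]; ring

lemma omJ_smulr (c : ℝ) (X Y : M7) : omJ X (c • Y) = c * omJ X Y := by
  simp only [omJ, wdg2, fa, fb, fc, fa', fb', fc', fp, fq, fr, fp', fq', fr',
    Matrix.smul_apply, smul_eq_mul]; ring

lemma omJ_zerol (Y : M7) : omJ 0 Y = 0 := by
  simp [omJ, wdg2, fa, fb, fc, fa', fb', fc', fp, fq, fr, fp', fq', fr']

lemma omJ_zeror (X : M7) : omJ X 0 = 0 := by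
  simp [omJ, wdg2, fa, fb, fc, fa', fb', fc', fp, fq, fr, fp', fq', fr']

lemma omK_addl (X X' Y : M7) : omK (X + X') Y = omK X Y + omK X' Y := by
  simp only [omK, wdg2, fa, fb, fc, fa', fb', fc', fp, fq, fr, fp', fq', fr',
    Matrix.add_apply]; ring

lemma omK_addr (X Y Y' : M7) : omK X (Y + Y') = omK X Y + omK X Y' := by
  simp only [omK, wdg2, fa, fb, fc, fa', fb', fc', fp, fq, fr, fp', fq', fr',
    Matrix.add_apply]; ring

lemma omK_smull (c : ℝ) (X Y : M7) : omK (c • X) Y = c * omK X Y := by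
  simp only [omK, wdg2, fa, fb, fc, fa', fb', fc', fp, fq, fr, fp', fq', fr',
    Matrix.smul_apply, smul_eq_mul]; ring

lemma omK_smulr (c : ℝ) (X Y : M7) : omK X (c • Y) = c * omK X Y := by
  simp only [omK, wdg2, fa, fb, fc, fa', fb', fc', fp, fq, fr, fp', fq', fr',
    Matrix.smul_apply, smul_eq_mul]; ring

lemma omK_zerol (Y : M7) : omK 0 Y = 0 := by
  simp [omK, wdg2, fa, fb, fc, fa', fb', fc', fp, fq, fr, fp', fq', fr']

lemma omK_zeror (X : M7) : omK X 0 = 0 := by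
  simp [omK, wdg2, fa, fb, fc, fa', fb', fc', fp, fq, fr, fp', fq', fr']

set_option maxHeartbeats 0 in
lemma key (W : M7) (hW : W ∈ u3) : ∀ X ∈ mm, ∀ Y ∈ mm,
    omJ (bk W X) Y + omJ X (bk W Y) = (W 1 4 + W 2 5 + W 3 6) * omK X Y ∧
    omK (bk W X) Y + omK X (bk W Y) = -(W 1 4 + W 2 5 + W 3 6) * omJ X Y := by
  obtain ⟨h1, h2, h3⟩ := hW
  have hs : ∀ i j : Fin 7, W j i = - W i j := by
    intro i j
    have := congrFun (congrFun h1 i) j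
    simpa [Matrix.transpose_apply, Matrix.neg_apply] using this
  have h0 : ∀ i : Fin 7, W i 0 = 0 := by
    intro i
    have := congrFun h2 i
    simpa [Matrix.mulVec, dotProduct, e0, Fin.sum_univ_seven] using this
  have h0' : ∀ i : Fin 7, W 0 i = 0 := fun i => by rw [hs i 0, h0, neg_zero]
  have hc : ∀ i j : Fin 7, (W * mE) i j = (mE * W) i j := fun i j => congrFun (congrFun h3 i) j
  have c1 : W 4 5 = W 1 2 := by
    have := hc 1 5
    simp [Matrix.mul_apply, Fin.sum_univ_seven, mE, Eij, Matrix.single,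
      Matrix.of_apply, Matrix.add_apply, Matrix.sub_apply] at this
    linarith
  have c2 : W 4 6 = W 1 3 := by
    have := hc 1 6
    simp [Matrix.mul_apply, Fin.sum_univ_seven, mE, Eij, Matrix.single,
      Matrix.of_apply, Matrix.add_apply, Matrix.sub_apply] at this
    linarith
  have c3 : W 5 6 = W 2 3 := by
    have := hc 2 6
    simp [Matrix.mul_apply, Fin.sum_univ_seven, mE, Eij, Matrix.single,
      Matrix.of_apply, Matrix.add_apply, Matrix.sub_apply] at this
    linarith
  have c4 : W 2 4 = W 1 5 := by
    have := hc 1 2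
    simp [Matrix.mul_apply, Fin.sum_univ_seven, mE, Eij, Matrix.single,
      Matrix.of_apply, Matrix.add_apply, Matrix.sub_apply] at this
    linarith [hs 2 4]
  have c5 : W 3 4 = W 1 6 := by
    have := hc 1 3
    simp [Matrix.mul_apply, Fin.sum_univ_seven, mE, Eij, Matrix.single,
      Matrix.of_apply, Matrix.add_apply, Matrix.sub_apply] at this
    linarith [hs 3 4]
  have c6 : W 3 5 = W 2 6 := by
    have := hc 2 3
    simp [Matrix.mul_apply, Fin.sum_univ_seven, mE, Eij, Matrix.single,
      Matrix.of_apply, Matrix.add_apply, Matrix.sub_apply] at this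
    linarith [hs 3 5]
  intro X hX
  induction hX using Submodule.span_induction with
  | mem x hx =>
    intro Y hY
    induction hY using Submodule.span_induction with
    | mem y hy =>
      simp only [Set.mem_insert_iff, Set.mem_singleton_iff] at hx hy
      rcases hx with rfl|rfl|rfl|rfl|rfl|rfl|rfl|rfl|rfl|rfl|rfl|rfl <;>
        rcases hy with rfl|rfl|rfl|rfl|rfl|rfl|rfl|rfl|rfl|rfl|rfl|rfl <;>
      · constructor <;>
        · simp only [omJ, omK, wdg2, fa, fb, fc, fa', fb', fc', fp, fq, fr, fp', fq', fr',
            mA, mB, mC, mA', mB', mC', mP, mQ, mR, mP', mQ', mR',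
            bk_subr, Matrix.sub_apply, bkEij, Eij_apply]
          simp only [h0, h0', hs 1 2, hs 1 3, hs 1 4, hs 1 5, hs 1 6, hs 2 3, hs 2 4, hs 2 5,
            hs 2 6, hs 3 4, hs 3 5, hs 3 6, hs 4 5, hs 4 6, hs 5 6, c1, c2, c3, c4, c5, c6]
          simp
          try ring
    | zero =>
      simp [bk_zeror, omJ_zeror, omK_zeror]
    | add y z hy hz ihy ihz =>
      obtain ⟨e1, e2⟩ := ihy
      obtain ⟨f1, f2⟩ := ihz
      constructor
      · rw [bk_addr, omJ_addr, omJ_addr, omK_addr]; linarith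
      · rw [bk_addr, omK_addr, omK_addr, omJ_addr]; linarith
    | smul a y hy ihy =>
      obtain ⟨e1, e2⟩ := ihy
      constructor
      · rw [bk_smulr, omJ_smulr, omJ_smulr, omK_smulr]; linear_combination a * e1
      · rw [bk_smulr, omK_smulr, omK_smulr, omJ_smulr]; linear_combination a * e2
  | zero =>
    intro Y hY
    simp [bk_zeror, omJ_zerol, omK_zerol]
  | add x y hx hy ihx ihy =>
    intro Y hY
    obtain ⟨e1, e2⟩ := ihx Y hY
    obtain ⟨f1, f2⟩ := ihy Y hY
    constructor
    · rw [bk_addr, omJ_addl, omJ_addl, omK_addl]; linarith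
    · rw [bk_addr, omK_addl, omK_addl, omJ_addl]; linarith
  | smul a x hx ihx =>
    intro Y hY
    obtain ⟨e1, e2⟩ := ihx Y hY
    constructor
    · rw [bk_smulr, omJ_smull, omJ_smull, omK_smull]; linear_combination a * e1
    · rw [bk_smulr, omK_smull, omK_smull, omJ_smull]; linear_combination a * e2

lemma mE_mem_u3 : mE ∈ u3 := by
  refine ⟨?_, ?_, rfl⟩
  · ext i j
    simp only [mE, Matrix.transpose_apply, Matrix.neg_apply, Matrix.add_apply, Eij_apply,
      and_comm]
    ring
  · funext i
    simp [Matrix.mulVec, dotProduct, e0, Fin.sum_univ_seven, mE, Matrix.add_apply, Eij_apply]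

lemma mE_trace3 : mE 1 4 + mE 2 5 + mE 3 6 = 3 := by
  simp [mE, Matrix.add_apply, Eij_apply]
  norm_num

lemma mA_mem : mA ∈ mm := Submodule.subset_span (by simp)
lemma mP_mem : mP ∈ mm := Submodule.subset_span (by simp)
lemma mP'_mem : mP' ∈ mm := Submodule.subset_span (by simp)

lemma omK_AP' : omK mA mP' = -1 := by
  simp only [omK, wdg2, fa, fb, fc, fa', fb', fc', fp, fq, fr, fp', fq', fr',
    mA, mP', Matrix.sub_apply, Eij_apply]
  simp
  norm_num

lemma omJ_AP : omJ mA mP = -1 := by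
  simp only [omJ, wdg2, fa, fb, fc, fa', fb', fc', fp, fq, fr, fp', fq', fr',
    mA, mP, Matrix.sub_apply, Eij_apply]
  simp
  norm_num

end Aux

/-- E rotates (ω_J, ω_K) with speed 3; the span of ω_J, ω_K is invariant
under the adjoint action of 𝔲(3), but neither form is itself invariant. -/
theorem stmt4 :
    (∀ X ∈ mm, ∀ Y ∈ mm,
      (omJ (bk mE X) Y + omJ X (bk mE Y) = 3 * omK X Y) ∧
      (omK (bk mE X) Y + omK X (bk mE Y) = -3 * omJ X Y)) ∧
    (∀ W ∈ u3, ∃ s t : ℝ, ∀ X ∈ mm, ∀ Y ∈ mm,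
      omJ (bk W X) Y + omJ X (bk W Y) = s * omJ X Y + t * omK X Y) ∧
    (∀ W ∈ u3, ∃ s t : ℝ, ∀ X ∈ mm, ∀ Y ∈ mm,
      omK (bk W X) Y + omK X (bk W Y) = s * omJ X Y + t * omK X Y) ∧
    ¬ (∀ W ∈ u3, ∀ X ∈ mm, ∀ Y ∈ mm, omJ (bk W X) Y + omJ X (bk W Y) = 0) ∧
    ¬ (∀ W ∈ u3, ∀ X ∈ mm, ∀ Y ∈ mm, omK (bk W X) Y + omK X (bk W Y) = 0) := by
  have key1 := fun X hX Y hY => key mE mE_mem_u3 X hX Y hY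
  rw [mE_trace3] at key1
  refine ⟨?_, ?_, ?_, ?_, ?_⟩
  · intro X hX Y hY
    obtain ⟨e1, e2⟩ := key1 X hX Y hY
    exact ⟨e1, by linarith⟩
  · intro W hW
    exact ⟨0, W 1 4 + W 2 5 + W 3 6, fun X hX Y hY => by
      have := (key W hW X hX Y hY).1; linarith⟩
  · intro W hW
    exact ⟨-(W 1 4 + W 2 5 + W 3 6), 0, fun X hX Y hY => by
      have := (key W hW X hX Y hY).2; linarith⟩
  · intro h
    have h1 := h mE mE_mem_u3 mA mA_mem mP' mP'_mem
    have h2 := (key1 mA mA_mem mP' mP'_mem).1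
    rw [omK_AP'] at h2
    linarith
  · intro h
    have h1 := h mE mE_mem_u3 mA mA_mem mP mP_mem
    have h2 := (key1 mA mA_mem mP mP_mem).2
    rw [omJ_AP] at h2
    linarith
end

section
/- The 3-form Φ is an eigenvector of eigenvalue 1 for the operator L_I: for all X, Y, Z ∈ 𝔪 one has Φ(IX,IY,Z) + Φ(IX,Y,IZ) + Φ(X,IY,IZ) = Φ(X,Y,Z). -/
/-!
Common setup: 𝔤 = 𝔰𝔬(7) realised as real skew-symmetric 7×7 matrices with
bracket `bk X Y = X*Y - Y*X`; the matrices A, B, C, A', B', C', P, Q, R, P', Q', R', E;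
the subspaces 𝔪 (`mm`) and 𝔲(3) (`u3`); the dual functionals a, …, r' (written
`fa, …, fr'`), given by the explicit formulas that characterise them as the unique
linear functionals on 𝔰𝔬(7) vanishing on 𝔲(3) whose restrictions to 𝔪 are dual to
the chosen basis; the invariant forms; the endomorphisms I, J, K; and the
Chevalley–Eilenberg differentials `dM1`, `dM2` restricted to 𝔪.
-/

open Matrix

lemma fa_I (X : M7) : fa (Iop X) = -(fa' X) := by
  simp [fa, Iop, mA, mB, mC, mA', mB', mC', mP, mQ, mR, mP', mQ', mR', Eij,
    Matrix.add_apply, Matrix.sub_apply, Matrix.smul_apply, Matrix.single]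
  ring

lemma fa'_I (X : M7) : fa' (Iop X) = fa X := by
  simp [fa', Iop, mA, mB, mC, mA', mB', mC', mP, mQ, mR, mP', mQ', mR', Eij,
    Matrix.add_apply, Matrix.sub_apply, Matrix.smul_apply, Matrix.single]

lemma fb_I (X : M7) : fb (Iop X) = -(fb' X) := by
  simp [fb, Iop, mA, mB, mC, mA', mB', mC', mP, mQ, mR, mP', mQ', mR', Eij,
    Matrix.add_apply, Matrix.sub_apply, Matrix.smul_apply, Matrix.single]
  ring

lemma fb'_I (X : M7) : fb' (Iop X) = fb X := by
  simp [fb', Iop, mA, mB, mC, mA', mB', mC', mP, mQ, mR, mP', mQ', mR', Eij,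
    Matrix.add_apply, Matrix.sub_apply, Matrix.smul_apply, Matrix.single]

lemma fc_I (X : M7) : fc (Iop X) = -(fc' X) := by
  simp [fc, Iop, mA, mB, mC, mA', mB', mC', mP, mQ, mR, mP', mQ', mR', Eij,
    Matrix.add_apply, Matrix.sub_apply, Matrix.smul_apply, Matrix.single]
  ring

lemma fc'_I (X : M7) : fc' (Iop X) = fc X := by
  simp [fc', Iop, mA, mB, mC, mA', mB', mC', mP, mQ, mR, mP', mQ', mR', Eij,
    Matrix.add_apply, Matrix.sub_apply, Matrix.smul_apply, Matrix.single]

lemma fp_I (X : M7) : fp (Iop X) = -(fp' X) := by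
  simp [fp, Iop, mA, mB, mC, mA', mB', mC', mP, mQ, mR, mP', mQ', mR', Eij,
    Matrix.add_apply, Matrix.sub_apply, Matrix.smul_apply, Matrix.single]
  ring

lemma fp'_I (X : M7) : fp' (Iop X) = fp X := by
  simp [fp', Iop, mA, mB, mC, mA', mB', mC', mP, mQ, mR, mP', mQ', mR', Eij,
    Matrix.add_apply, Matrix.sub_apply, Matrix.smul_apply, Matrix.single]
  ring

lemma fq_I (X : M7) : fq (Iop X) = -(fq' X) := by
  simp [fq, Iop, mA, mB, mC, mA', mB', mC', mP, mQ, mR, mP', mQ', mR', Eij,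
    Matrix.add_apply, Matrix.sub_apply, Matrix.smul_apply, Matrix.single]
  ring

lemma fq'_I (X : M7) : fq' (Iop X) = fq X := by
  simp [fq', Iop, mA, mB, mC, mA', mB', mC', mP, mQ, mR, mP', mQ', mR', Eij,
    Matrix.add_apply, Matrix.sub_apply, Matrix.smul_apply, Matrix.single]
  ring

lemma fr_I (X : M7) : fr (Iop X) = -(fr' X) := by
  simp [fr, Iop, mA, mB, mC, mA', mB', mC', mP, mQ, mR, mP', mQ', mR', Eij,
    Matrix.add_apply, Matrix.sub_apply, Matrix.smul_apply, Matrix.single]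
  ring

lemma fr'_I (X : M7) : fr' (Iop X) = fr X := by
  simp [fr', Iop, mA, mB, mC, mA', mB', mC', mP, mQ, mR, mP', mQ', mR', Eij,
    Matrix.add_apply, Matrix.sub_apply, Matrix.smul_apply, Matrix.single]
  ring

/-- Φ is an eigenvector of eigenvalue 1 for L_I. -/
theorem stmt14 :
    ∀ X ∈ mm, ∀ Y ∈ mm, ∀ Z ∈ mm,
      Phi (Iop X) (Iop Y) Z + Phi (Iop X) Y (Iop Z) + Phi X (Iop Y) (Iop Z)
        = Phi X Y Z := by
  intro X _ Y _ Z _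
  simp only [Phi, wdg3, fa_I, fa'_I, fb_I, fb'_I, fc_I, fc'_I, fp_I, fp'_I, fq_I, fq'_I,
    fr_I, fr'_I]
  ring
end
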